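/- Suppose P ∈ [0,1/2). Define g ∈ ℝ^N by g_{l·r+1} = c_l for l = 0,1,…,T and g_j = 0 for every index j not of the form l·r+1. Then g is an equilibrium of the discrete δ system with mass ρ: Σ_{k=1}^{N} g_k = ρ and Q_j(g) = 0 for every j = 1,…,N. In particular, the equilibrium is supported only on the velocity cells whose indices are congruent to 1 modulo r (the cells containing the quantized velocities 0, Δv, …, V_max), and its nonzero values c_0,…,c_T do not depend on the refinement parameter r. -/

import Mathlib

/-- Right-hand side of the discrete δ system on the velocity cells `1,…,N`:
for `1 ≤ j ≤ N−1`,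
`Q_j(f) = η[(1−P)f_j² + 2(1−P)f_j Σ_{k=j+1}^{N} f_k + Pρ f_{j−r} 𝟙_{j>r} − f_j Σ_{k=1}^{N} f_k]`,
and
`Q_N(f) = η[(1−P)f_N² + Pρ Σ_{h=N−r}^{N} f_h − f_N Σ_{k=1}^{N} f_k]`. -/
noncomputable def Qdelta (η P ρ : ℝ) (r N : ℕ) (f : ℕ → ℝ) (j : ℕ) : ℝ :=
  if j = N then
    η * ((1 - P) * f N ^ 2 + P * ρ * (∑ h ∈ Finset.Icc (N - r) N, f h)
      - f N * ∑ k ∈ Finset.Icc 1 N, f k)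
  else
    η * ((1 - P) * f j ^ 2 + 2 * (1 - P) * f j * (∑ k ∈ Finset.Icc (j + 1) N, f k)
      + (if r < j then P * ρ * f (j - r) else 0)
      - f j * ∑ k ∈ Finset.Icc 1 N, f k)

/-- Suppose `P ∈ [0,1/2)`.  Define `g ∈ ℝ^N` by `g_{l·r+1} = c_l` for
`l = 0,…,T` and `g_j = 0` for every other index, where the `c_l` are the
recursively defined weights (independent of the refinement parameter `r`).
Then `g` is an equilibrium of the discrete δ system with mass `ρ`:
`Σ_k g_k = ρ` and `Q_j(g) = 0` for every `j = 1,…,N`.  In particular the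
equilibrium is supported only on the velocity cells containing the quantized
velocities `0, Δv, …, Vmax`. -/
theorem statement12 (Vmax Δv η P ρ : ℝ) (T r N : ℕ) (hT : 1 ≤ T) (hr : 1 ≤ r)
    (hV : 0 < Vmax) (hΔv : Δv = Vmax / (T : ℝ)) (hN : N = r * T + 1)
    (hρ : 0 < ρ) (hη : 0 < η) (hP0 : 0 ≤ P) (hP : P < 1 / 2)
    (c : ℕ → ℝ)
    (hc0 : c 0 = ρ * (1 - 2 * P) / (1 - P))
    (hcl : ∀ l, 1 ≤ l → l ≤ T - 1 →
      c l = ((1 - 2 * P) * ρ - 2 * (1 - P) * (∑ m ∈ Finset.range l, c m)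
        + Real.sqrt (((1 - 2 * P) * ρ - 2 * (1 - P) * (∑ m ∈ Finset.range l, c m)) ^ 2
            + 4 * P * (1 - P) * ρ * c (l - 1))) / (2 * (1 - P)))
    (hcT : c T = ρ - ∑ m ∈ Finset.range T, c m)
    (g : ℕ → ℝ)
    (hg : ∀ l, l ≤ T → g (l * r + 1) = c l)
    (hg0 : ∀ j, 1 ≤ j → j ≤ N → (∀ l, l ≤ T → j ≠ l * r + 1) → g j = 0) :
    (∑ k ∈ Finset.Icc 1 N, g k = ρ)
    ∧ (∀ j, 1 ≤ j → j ≤ N → Qdelta η P ρ r N g j = 0) := by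
  obtain ⟨t, rfl⟩ : ∃ t, T = t + 1 := ⟨T - 1, by omega⟩
  simp only [Nat.add_sub_cancel] at hcl
  have hrpos : 0 < r := hr
  have hP1 : (0:ℝ) < 1 - P := by linarith
  have h2P : (0:ℝ) < 1 - 2*P := by linarith
  -- basic quadratic identity for c 0
  have he0 : (1-P) * c 0 ^ 2 - (1-2*P) * ρ * c 0 = 0 := by
    have hne : (1:ℝ) - P ≠ 0 := ne_of_gt hP1
    rw [hc0]; field_simp; ring
  -- nonnegativity of the c_l, l ≤ t
  have cnn : ∀ l, l ≤ t → 0 ≤ c l := by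
    intro l
    induction l with
    | zero =>
      intro _
      rw [hc0]
      exact div_nonneg (mul_nonneg hρ.le (by linarith)) (by linarith)
    | succ n ih =>
      intro hl
      have hn : 0 ≤ c n := ih (by omega)
      rw [hcl (n+1) (by omega) hl]
      simp only [Nat.add_sub_cancel]
      set B := (1 - 2 * P) * ρ - 2 * (1 - P) * (∑ m ∈ Finset.range (n+1), c m) with hB
      have hE : 0 ≤ 4 * P * (1 - P) * ρ * c n :=
        mul_nonneg (mul_nonneg (mul_nonneg (by linarith) (by linarith)) hρ.le) hn
      have hs : -B ≤ Real.sqrt (B ^ 2 + 4 * P * (1 - P) * ρ * c n) := by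
        calc -B ≤ |B| := neg_le_abs B
        _ = Real.sqrt (B ^ 2) := (Real.sqrt_sq_eq_abs B).symm
        _ ≤ _ := Real.sqrt_le_sqrt (by linarith)
      exact div_nonneg (by linarith) (by linarith)
  -- the quadratic identity satisfied by c_l, 1 ≤ l ≤ t
  have Ekey : ∀ l, 1 ≤ l → l ≤ t →
      (1-P) * c l ^ 2 - ((1 - 2 * P) * ρ - 2 * (1 - P) * (∑ m ∈ Finset.range l, c m)) * c l
        - P * ρ * c (l-1) = 0 := by
    intro l h1 h2
    have hcl' := hcl l h1 h2
    set B := (1 - 2 * P) * ρ - 2 * (1 - P) * (∑ m ∈ Finset.range l, c m) with hB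
    have hn : 0 ≤ c (l-1) := cnn (l-1) (by omega)
    have hD : 0 ≤ B ^ 2 + 4 * P * (1 - P) * ρ * c (l - 1) := by
      have h3 : 0 ≤ 4 * P * (1 - P) * ρ * c (l-1) :=
        mul_nonneg (mul_nonneg (mul_nonneg (by linarith) (by linarith)) hρ.le) hn
      have h4 := sq_nonneg B
      linarith
    have hne : (2:ℝ) * (1 - P) ≠ 0 := by positivity
    have hsqrt : Real.sqrt (B ^ 2 + 4 * P * (1 - P) * ρ * c (l - 1)) = 2*(1-P)*c l - B := by
      rw [hcl']; field_simp; ring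
    have hsq : (2*(1-P)*c l - B)^2 = B ^ 2 + 4 * P * (1 - P) * ρ * c (l - 1) := by
      rw [← hsqrt]; exact Real.sq_sqrt hD
    have h4 : (4*(1-P)) * ((1-P) * c l ^ 2 - B * c l - P * ρ * c (l-1)) = 0 := by
      linear_combination hsq
    rcases mul_eq_zero.mp h4 with h | h
    · exfalso; nlinarith
    · exact h
  -- the summed identity
  have hkey : ∀ l, l ≤ t + 1 → 1 ≤ l →
      (1-P) * (∑ m ∈ Finset.range l, c m)^2 - (1-2*P) * ρ * (∑ m ∈ Finset.range l, c m)
        - P * ρ * (∑ m ∈ Finset.range (l-1), c m) = 0 := by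
    intro l
    induction l with
    | zero => intro _ h1; exact absurd h1 (by omega)
    | succ n ih =>
      intro hl _
      rcases Nat.eq_zero_or_pos n with rfl | hn
      · simp only [zero_add, Finset.sum_range_one, Nat.add_sub_cancel, Finset.sum_range_zero]
        linear_combination he0
      · have hkn := ih (by omega) hn
        have hEn := Ekey n hn (by omega)
        have hsum' : ∑ m ∈ Finset.range n, c m = (∑ m ∈ Finset.range (n-1), c m) + c (n-1) := by
          conv_lhs => rw [show n = (n-1)+1 by omega, Finset.sum_range_succ]
        simp only [Nat.add_sub_cancel]
        rw [Finset.sum_range_succ]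
        linear_combination hkn + hEn - P*ρ*hsum'
  have hSmass : ∑ m ∈ Finset.range (t+2), c m = ρ := by
    rw [Finset.sum_range_succ, hcT]; ring
  -- the identity needed at the top cell
  have hstar : (1-P) * c (t+1)^2 + P*ρ*(c t + c (t+1)) - c (t+1)*ρ = 0 := by
    have hk := hkey (t+1) (by omega) (by omega)
    simp only [Nat.add_sub_cancel] at hk
    have hsum : ∑ m ∈ Finset.range (t+1), c m = (∑ m ∈ Finset.range t, c m) + c t :=
      Finset.sum_range_succ c t
    rw [hcT]
    linear_combination hk - P*ρ*hsum
  -- splitting off the bottom of an Icc sum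
  have bsplit : ∀ (f : ℕ → ℝ) (a b : ℕ), a ≤ b →
      ∑ k ∈ Finset.Icc a b, f k = f a + ∑ k ∈ Finset.Icc (a+1) b, f k := by
    intro f a b hab
    rw [Finset.Icc_add_one_left_eq_Ioc, ← Finset.Icc_erase_left,
        Finset.add_sum_erase _ f (Finset.mem_Icc.mpr ⟨le_rfl, hab⟩)]
  -- tail sums of c
  have tail : ∀ l, l ≤ t+1 → ∑ m ∈ Finset.Icc l (t+1), c m = ρ - ∑ m ∈ Finset.range l, c m := by
    intro l hl
    have h := Finset.sum_Ico_consecutive c (Nat.zero_le l) (show l ≤ t+2 by omega)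
    rw [← Finset.range_eq_Ico, ← Finset.range_eq_Ico] at h
    rw [hSmass] at h
    have e : Finset.Icc l (t+1) = Finset.Ico l (t+2) := by rw [show t+2 = t+1+1 from rfl, Finset.Ico_add_one_right_eq_Icc]
    rw [e]
    linarith
  -- sums of g over upper Icc's
  have sumIcc : ∀ l, l ≤ t+1 →
      ∑ k ∈ Finset.Icc (l*r+1) N, g k = ∑ m ∈ Finset.Icc l (t+1), c m := by
    intro l hl
    have step1 : ∑ m ∈ Finset.Icc l (t+1), c m
        = ∑ k ∈ (Finset.Icc l (t+1)).image (fun m => m*r+1), g k := by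
      rw [Finset.sum_image (by
        intro x _ y _ h
        exact Nat.eq_of_mul_eq_mul_right hrpos (by simp only at h; omega))]
      exact Finset.sum_congr rfl fun m hm => (hg m (Finset.mem_Icc.mp hm).2).symm
    rw [step1]
    refine (Finset.sum_subset ?_ ?_).symm
    · intro x hx
      obtain ⟨m, hm, rfl⟩ := Finset.mem_image.mp hx
      obtain ⟨h1, h2⟩ := Finset.mem_Icc.mp hm
      have e1 : l*r ≤ m*r := Nat.mul_le_mul_right r h1
      have e2 : m*r ≤ (t+1)*r := Nat.mul_le_mul_right r h2
      have e3 : (t+1)*r = r*(t+1) := Nat.mul_comm _ _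
      rw [Finset.mem_Icc, hN]
      omega
    · intro k hk hknot
      obtain ⟨hk1, hk2⟩ := Finset.mem_Icc.mp hk
      apply hg0 k (by omega) hk2
      intro m hm hkeq
      apply hknot
      have hml : l ≤ m := by
        have hlm : l*r ≤ m*r := by omega
        exact Nat.le_of_mul_le_mul_right hlm hrpos
      exact Finset.mem_image.mpr ⟨m, Finset.mem_Icc.mpr ⟨hml, hm⟩, hkeq.symm⟩
  -- total mass
  have mass : ∑ k ∈ Finset.Icc 1 N, g k = ρ := by
    have h := sumIcc 0 (Nat.zero_le _)
    have h2 := tail 0 (Nat.zero_le _)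
    simp only [Nat.zero_mul, Nat.zero_add] at h
    simp only [Finset.sum_range_zero, sub_zero] at h2
    rw [h, h2]
  refine ⟨mass, ?_⟩
  intro j hj1 hjN
  by_cases hsup : ∃ l, l ≤ t + 1 ∧ j = l*r+1
  · obtain ⟨l, hlT, rfl⟩ := hsup
    rcases eq_or_lt_of_le hlT with rfl | hlt
    · -- l = t+1 : the top cell
      have hjN' : (t+1)*r+1 = N := by rw [hN, Nat.mul_comm]
      unfold Qdelta
      rw [if_pos hjN']
      have hgN : g N = c (t+1) := by rw [← hjN']; exact hg (t+1) le_rfl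
      have hNr : N - r = t*r+1 := by
        have h1 : (t+1)*r = t*r + r := Nat.succ_mul t r
        omega
      have hlow := sumIcc t (by omega)
      rw [← hNr] at hlow
      have hpair : ∑ m ∈ Finset.Icc t (t+1), c m = c t + c (t+1) := by
        rw [bsplit c t (t+1) (by omega)]
        simp [Finset.Icc_self]
      rw [hgN, mass, hlow, hpair]
      linear_combination η * hstar
    · -- l < t+1
      have hlt' : l ≤ t := by omega
      have hne : l*r+1 ≠ N := by
        have h1 : (l+1)*r ≤ (t+1)*r := Nat.mul_le_mul_right r (by omega)
        have h2 : (l+1)*r = l*r + r := Nat.succ_mul l r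
        have h3 : (t+1)*r = r*(t+1) := Nat.mul_comm _ _
        rw [hN]; omega
      unfold Qdelta
      rw [if_neg hne]
      have hgj : g (l*r+1) = c l := hg l (by omega)
      have hleN : l*r+1 ≤ N := by
        have h1 : (l+1)*r ≤ (t+1)*r := Nat.mul_le_mul_right r (by omega)
        have h2 : (l+1)*r = l*r + r := Nat.succ_mul l r
        have h3 : (t+1)*r = r*(t+1) := Nat.mul_comm _ _
        rw [hN]; omega
      have hup : ∑ k ∈ Finset.Icc (l*r+1+1) N, g k
          = ρ - ((∑ m ∈ Finset.range l, c m) + c l) := by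
        have h1 := sumIcc l (by omega)
        have h2 := bsplit g (l*r+1) N hleN
        have h3 := tail l (by omega)
        rw [hgj] at h2
        linarith
      rw [hgj, mass, hup]
      rcases Nat.eq_zero_or_pos l with rfl | hl0
      · rw [if_neg (show ¬ r < 0*r+1 by omega)]
        simp only [Finset.sum_range_zero]
        linear_combination (-η) * he0
      · have hifr : r < l*r+1 := by
          have h1 : 1*r ≤ l*r := Nat.mul_le_mul_right r hl0
          omega
        rw [if_pos hifr]
        have hsub : l*r+1-r = (l-1)*r+1 := by
          have h1 : (l-1+1) * r = (l-1)*r + r := Nat.succ_mul (l-1) r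
          have h2 : l-1+1 = l := by omega
          rw [h2] at h1
          omega
        rw [hsub, hg (l-1) (by omega)]
        have hE := Ekey l hl0 hlt'
        linear_combination (-η) * hE
  · -- unsupported cell
    push_neg at hsup
    have hjN' : j ≠ N := by
      intro h
      exact hsup (t+1) le_rfl (by rw [h, hN, Nat.mul_comm])
    unfold Qdelta
    rw [if_neg hjN']
    have hgj : g j = 0 := hg0 j hj1 hjN hsup
    rw [hgj]
    rcases lt_or_ge r j with hrj | hrj
    · rw [if_pos hrj]
      have hjr : g (j - r) = 0 := by
        apply hg0 (j-r) (by omega) (by omega)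
        intro m hm heq
        have h1 : j = (m+1)*r+1 := by
          have h2 : (m+1)*r = m*r + r := Nat.succ_mul m r
          omega
        have h3 : m+1 ≤ t+1 := by
          by_contra h4
          have h5 : (t+2)*r ≤ (m+1)*r := Nat.mul_le_mul_right r (by omega)
          have h6 : (t+2)*r = (t+1)*r + r := Nat.succ_mul (t+1) r
          have h7 : (t+1)*r = r*(t+1) := Nat.mul_comm _ _
          rw [hN] at hjN
          omega
        exact hsup (m+1) h3 h1
      rw [hjr]; ring
    · rw [if_neg (by omega)]; ring
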